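/- arXiv:2305.10155 — 4 statements merged into one kernel-verified Lean document; each statement's English description precedes it below -/
import Mathlib

section
/- For any constant ξ > 0 and n₀ ≥ log_{2^{-ξ}}((1-2^{-ξ})/2), the total length of guard-bands added is small: if |X| = 2^n and guard-bands of length ℓ_m = ⌊2^{(1-ξ)(m-1)}⌋ are inserted recursively at each level m from n down to n₀+1 (one guard-band of length ℓ_m between the two halves at recursion depth n-m), then the total length |G| of the resulting word satisfies |G| ≤ |X|·(1 + 2^{-(ξn₀+1)}/(1-2^{-ξ})). -/
/-- Guard-band length at level `m`: `ℓ_m = ⌊2^((1-ξ)(m-1))⌋`. -/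
noncomputable def gbLen (ξ : ℝ) (m : ℕ) : ℕ := ⌊(2:ℝ) ^ ((1 - ξ) * ((m:ℝ) - 1))⌋₊

/-- Total length of `g(X, n₀, ξ)` when `|X| = 2^n`: at each level `m` from `n₀+1` to `n`
there are `2^(n-m)` guard-bands of length `ℓ_m`. -/
noncomputable def gbTotalLen (ξ : ℝ) (n₀ n : ℕ) : ℕ :=
  2 ^ n + ∑ m ∈ Finset.Icc (n₀ + 1) n, 2 ^ (n - m) * gbLen ξ m

theorem stmt0 (ξ : ℝ) (n₀ n : ℕ) (hξ : 0 < ξ)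
    (hn₀ : (2:ℝ) ^ (-(ξ * (n₀:ℝ))) ≤ (1 - (2:ℝ) ^ (-ξ)) / 2) :
    (gbTotalLen ξ n₀ n : ℝ) ≤
      (2:ℝ) ^ n * (1 + (2:ℝ) ^ (-(ξ * (n₀:ℝ) + 1)) / (1 - (2:ℝ) ^ (-ξ))) := by
  have h2 : (1:ℝ) < 2 := one_lt_two
  set r : ℝ := (2:ℝ) ^ (-ξ) with hr
  have hr0 : 0 < r := Real.rpow_pos_of_pos two_pos _
  have hr1 : r < 1 := Real.rpow_lt_one_of_one_lt_of_neg h2 (by linarith)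
  have hsub : 0 < 1 - r := by linarith
  have hgeo : ∀ k : ℕ, ∑ j ∈ Finset.range k, r ^ j ≤ (1 - r)⁻¹ := by
    intro k
    rw [geom_sum_eq (by linarith : r ≠ 1)]
    have heq : (r ^ k - 1) / (r - 1) = (1 - r ^ k) / (1 - r) := by
      rw [div_eq_div_iff (by linarith) (by linarith)]; ring
    rw [heq, div_le_iff₀ hsub, inv_mul_cancel₀ (by linarith)]
    have := pow_nonneg hr0.le k
    linarith
  -- term bound
  have hterm : ∀ m ∈ Finset.Icc (n₀ + 1) n,
      ((2:ℝ) ^ (n - m) * (gbLen ξ m : ℝ)) ≤ (2:ℝ) ^ n / 2 * r ^ (m - 1) := by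
    intro m hm
    obtain ⟨hm1, hm2⟩ := Finset.mem_Icc.mp hm
    have hfloor : (gbLen ξ m : ℝ) ≤ (2:ℝ) ^ ((1 - ξ) * ((m:ℝ) - 1)) :=
      Nat.floor_le (Real.rpow_nonneg (by norm_num) _)
    have h1 : ((2:ℝ) ^ (n - m) : ℝ) = (2:ℝ) ^ (((n:ℝ)) - (m:ℝ)) := by
      rw [← Real.rpow_natCast 2 (n - m), Nat.cast_sub hm2]
    have h2' : (2:ℝ) ^ (((n:ℝ)) - (m:ℝ)) * (2:ℝ) ^ ((1 - ξ) * ((m:ℝ) - 1))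
        = (2:ℝ) ^ n / 2 * r ^ (m - 1) := by
      rw [← Real.rpow_add two_pos]
      have hm1' : (1:ℝ) ≤ (m:ℝ) := by exact_mod_cast Nat.one_le_iff_ne_zero.mpr (by omega)
      have : ((n:ℝ) - m) + (1 - ξ) * ((m:ℝ) - 1) = ((n:ℝ) - 1) + (-ξ) * ((m:ℝ) - 1) := by
        ring
      rw [this, Real.rpow_add two_pos, Real.rpow_sub two_pos, Real.rpow_one,
        Real.rpow_natCast]
      congr 1
      rw [Real.rpow_mul (by norm_num : (0:ℝ) ≤ 2)]
      rw [← hr]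
      rw [show ((m:ℝ) - 1) = ((m - 1 : ℕ) : ℝ) by push_cast [Nat.cast_sub (by omega : 1 ≤ m)]; ring]
      exact Real.rpow_natCast r (m - 1)
    calc (2:ℝ) ^ (n - m) * (gbLen ξ m : ℝ)
        ≤ (2:ℝ) ^ (n - m) * (2:ℝ) ^ ((1 - ξ) * ((m:ℝ) - 1)) := by
          apply mul_le_mul_of_nonneg_left hfloor (by positivity)
      _ = (2:ℝ) ^ n / 2 * r ^ (m - 1) := by rw [h1, h2']
  -- sum bound
  have hsum : (∑ m ∈ Finset.Icc (n₀ + 1) n, ((2:ℝ) ^ (n - m) * (gbLen ξ m : ℝ)))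
      ≤ (2:ℝ) ^ n / 2 * (r ^ n₀ * (1 - r)⁻¹) := by
    calc ∑ m ∈ Finset.Icc (n₀ + 1) n, ((2:ℝ) ^ (n - m) * (gbLen ξ m : ℝ))
        ≤ ∑ m ∈ Finset.Icc (n₀ + 1) n, (2:ℝ) ^ n / 2 * r ^ (m - 1) :=
          Finset.sum_le_sum hterm
      _ = (2:ℝ) ^ n / 2 * ∑ m ∈ Finset.Icc (n₀ + 1) n, r ^ (m - 1) := by
          rw [Finset.mul_sum]
      _ ≤ (2:ℝ) ^ n / 2 * (r ^ n₀ * (1 - r)⁻¹) := by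
          apply mul_le_mul_of_nonneg_left _ (by positivity)
          have : ∑ m ∈ Finset.Icc (n₀ + 1) n, r ^ (m - 1)
              = r ^ n₀ * ∑ j ∈ Finset.range (n + 1 - (n₀ + 1)), r ^ j := by
            rw [← Finset.Ico_add_one_right_eq_Icc, Finset.sum_Ico_eq_sum_range, Finset.mul_sum]
            apply Finset.sum_congr rfl
            intro j _
            rw [← pow_add]
            congr 1
            omega
          rw [this]
          exact mul_le_mul_of_nonneg_left (hgeo _) (by positivity)
  -- RHS rewrite
  have hrhs : (2:ℝ) ^ (-(ξ * (n₀:ℝ) + 1)) = r ^ n₀ / 2 := by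
    rw [show -(ξ * (n₀:ℝ) + 1) = (-ξ) * (n₀:ℝ) + (-1) by ring, Real.rpow_add two_pos,
      Real.rpow_mul (by norm_num : (0:ℝ) ≤ 2), ← hr, Real.rpow_natCast,
      Real.rpow_neg_one]
    ring
  have hcast : (gbTotalLen ξ n₀ n : ℝ)
      = (2:ℝ) ^ n + ∑ m ∈ Finset.Icc (n₀ + 1) n, ((2:ℝ) ^ (n - m) * (gbLen ξ m : ℝ)) := by
    simp [gbTotalLen]
  rw [hcast, hrhs]
  have hpos : (0:ℝ) < r ^ n₀ * (1 - r)⁻¹ := by positivity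
  have : (2:ℝ) ^ n * (1 + r ^ n₀ / 2 / (1 - r))
      = (2:ℝ) ^ n + (2:ℝ) ^ n / 2 * (r ^ n₀ * (1 - r)⁻¹) := by
    field_simp
  rw [this]
  linarith
end

section
/- With the recursive guard-band construction, if n₀ ≥ log_{2^{-ξ}}((1-2^{-ξ})/2) and n ≥ n₀+1, then for every index j in G = g(X, n₀, ξ), the number of data bits (bits originating from X) in the prefix G_1^j is at least the number of guard-band bits in that prefix. -/
/-- Marker word of `g(X, n₀, ξ)` at level `n`: `true` marks a data bit (originating
from `X`), `false` marks a guard-band bit. For `n ≤ n₀` the word is all data; otherwise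
it is the recursive concatenation with a guard-band of length `ℓ_n` in the middle. -/
noncomputable def gbMark (ξ : ℝ) (n₀ : ℕ) : ℕ → List Bool
  | 0 => List.replicate (2 ^ 0) true
  | (n + 1) =>
      if n + 1 ≤ n₀ then List.replicate (2 ^ (n + 1)) true
      else gbMark ξ n₀ n ++ List.replicate (gbLen ξ (n + 1)) false ++ gbMark ξ n₀ n

lemma gbMark_count_true (ξ : ℝ) (n₀ : ℕ) : ∀ n, (gbMark ξ n₀ n).count true = 2 ^ n := by
  intro n
  induction n with
  | zero => simp [gbMark]
  | succ n ih =>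
    by_cases h : n + 1 ≤ n₀
    · simp [gbMark, h]
    · simp [gbMark, h, List.count_append, ih, List.count_replicate]
      ring

lemma gbMark_eq_of_le (ξ : ℝ) (n₀ : ℕ) {n : ℕ} (h : n ≤ n₀) :
    gbMark ξ n₀ n = List.replicate (2 ^ n) true := by
  cases n with
  | zero => rfl
  | succ n => simp [gbMark, h]

lemma gbLen_le (ξ : ℝ) (m : ℕ) : (gbLen ξ m : ℝ) ≤ (2:ℝ) ^ ((1-ξ) * ((m:ℝ)-1)) :=
  Nat.floor_le (Real.rpow_nonneg (by norm_num) _)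

lemma count_false_bound (ξ : ℝ) (n₀ : ℕ) : ∀ n, n₀ ≤ n →
    (((gbMark ξ n₀ n).count false : ℝ)) ≤
      (2:ℝ) ^ ((n:ℝ) - 1) * ∑ k ∈ Finset.Ico n₀ n, ((2:ℝ) ^ (-ξ)) ^ k := by
  intro n
  induction n with
  | zero =>
    intro h
    have : (gbMark ξ n₀ 0).count false = 0 := by
      simp [gbMark, List.count_replicate]
    rw [this]
    push_cast
    positivity
  | succ n ih =>
    intro h
    by_cases hle : n + 1 ≤ n₀
    · have : (gbMark ξ n₀ (n+1)).count false = 0 := by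
        simp [gbMark_eq_of_le ξ n₀ hle, List.count_replicate]
      rw [this]
      push_cast
      positivity
    · push_neg at hle
      have hn₀n : n₀ ≤ n := Nat.lt_succ_iff.mp hle
      have unfold1 : gbMark ξ n₀ (n+1) =
          gbMark ξ n₀ n ++ List.replicate (gbLen ξ (n + 1)) false ++ gbMark ξ n₀ n := by
        simp [gbMark, Nat.not_le.mpr hle]
      have hF := ih hn₀n
      have hcount : ((gbMark ξ n₀ (n+1)).count false : ℝ)
          = 2 * ((gbMark ξ n₀ n).count false : ℝ) + (gbLen ξ (n+1) : ℝ) := by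
        rw [unfold1]
        simp [List.count_append, List.count_replicate_self]
        push_cast
        ring
      have hpow : (2:ℝ) ^ ((1-ξ) * (((n+1:ℕ):ℝ)-1)) = (2:ℝ)^((n:ℝ)) * ((2:ℝ)^(-ξ))^n := by
        rw [← Real.rpow_natCast ((2:ℝ)^(-ξ)) n, ← Real.rpow_mul (by norm_num),
          ← Real.rpow_add (by norm_num)]
        push_cast
        ring_nf
      have hℓ : (gbLen ξ (n+1) : ℝ) ≤ (2:ℝ)^((n:ℝ)) * ((2:ℝ)^(-ξ))^n := by
        rw [← hpow]; exact gbLen_le ξ (n+1)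
      have hsum : ∑ k ∈ Finset.Ico n₀ (n+1), ((2:ℝ) ^ (-ξ)) ^ k
          = ∑ k ∈ Finset.Ico n₀ n, ((2:ℝ) ^ (-ξ)) ^ k + ((2:ℝ)^(-ξ))^n :=
        Finset.sum_Ico_succ_top hn₀n _
      have h2 : (2:ℝ) ^ (((n:ℕ):ℝ)) = 2 * (2:ℝ)^((n:ℝ)-1) := by
        rw [show (2:ℝ)*(2:ℝ)^((n:ℝ)-1) = (2:ℝ)^((1:ℝ)) * (2:ℝ)^((n:ℝ)-1) by
          rw [Real.rpow_one], ← Real.rpow_add (by norm_num)]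
        norm_num
      have hcast : (((n+1:ℕ):ℝ) - 1) = (n:ℝ) := by push_cast; ring
      rw [hcount, hcast, hsum]
      calc 2 * ((gbMark ξ n₀ n).count false : ℝ) + (gbLen ξ (n+1) : ℝ)
          ≤ 2 * ((2:ℝ)^((n:ℝ)-1) * ∑ k ∈ Finset.Ico n₀ n, ((2:ℝ)^(-ξ))^k)
            + (2:ℝ)^((n:ℝ)) * ((2:ℝ)^(-ξ))^n := by
            exact add_le_add (by linarith) hℓ
        _ = (2:ℝ)^((n:ℝ)) * (∑ k ∈ Finset.Ico n₀ n, ((2:ℝ)^(-ξ))^k + ((2:ℝ)^(-ξ))^n) := by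
            rw [h2]; push_cast; ring

lemma key (ξ : ℝ) (n₀ : ℕ) (hξ : 0 < ξ)
    (hn₀ : (2:ℝ) ^ (-(ξ * (n₀:ℝ))) ≤ (1 - (2:ℝ) ^ (-ξ)) / 2)
    {n : ℕ} (h : n₀ ≤ n) :
    (gbMark ξ n₀ n).count false + gbLen ξ (n+1) ≤ 2 ^ n := by
  set r : ℝ := (2:ℝ)^(-ξ) with hr
  have hr0 : 0 < r := Real.rpow_pos_of_pos (by norm_num) _
  have hr1 : r < 1 := Real.rpow_lt_one_of_one_lt_of_neg (by norm_num) (by linarith)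
  have hrn₀ : r ^ n₀ ≤ (1 - r) / 2 := by
    rw [hr, ← Real.rpow_natCast ((2:ℝ)^(-ξ)) n₀, ← Real.rpow_mul (by norm_num)]
    convert hn₀ using 2
    ring
  have hsum : ∑ k ∈ Finset.Ico n₀ n, r ^ k ≤ 1/2 := by
    have h1 : (1 - r) * ∑ k ∈ Finset.Ico n₀ n, r ^ k = r ^ n₀ - r ^ n := by
      rw [geom_sum_Ico (ne_of_lt hr1) h]
      have hne : r - 1 ≠ 0 := by intro hc; have : r = 1 := by linarith
                                 exact (ne_of_lt hr1) this
      field_simp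
      ring
    have h2 : (1 - r) * ∑ k ∈ Finset.Ico n₀ n, r ^ k ≤ (1 - r) / 2 := by
      rw [h1]
      have : (0:ℝ) ≤ r ^ n := le_of_lt (pow_pos hr0 n)
      linarith
    have h3 : 0 < 1 - r := by linarith
    nlinarith
  have hF := count_false_bound ξ n₀ n h
  have hℓ : (gbLen ξ (n+1) : ℝ) ≤ (2:ℝ)^((n:ℝ)) * r ^ n := by
    have := gbLen_le ξ (n+1)
    rw [← Real.rpow_natCast r n, hr, ← Real.rpow_mul (by norm_num),
      ← Real.rpow_add (by norm_num)]
    convert this using 2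
    push_cast; ring
  have hrn : r ^ n ≤ r ^ n₀ := pow_le_pow_of_le_one (le_of_lt hr0) (le_of_lt hr1) h
  have hpos : (0:ℝ) < (2:ℝ)^((n:ℝ)) := Real.rpow_pos_of_pos (by norm_num) _
  have h2n1 : (2:ℝ)^((n:ℝ)-1) = (2:ℝ)^((n:ℝ)) / 2 := by
    rw [Real.rpow_sub (by norm_num)]; norm_num
  have hreal : ((gbMark ξ n₀ n).count false : ℝ) + (gbLen ξ (n+1) : ℝ) ≤ (2:ℝ)^((n:ℝ)) := by
    have hA : ((gbMark ξ n₀ n).count false : ℝ) ≤ (2:ℝ)^((n:ℝ)) / 4 := by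
      calc ((gbMark ξ n₀ n).count false : ℝ)
          ≤ (2:ℝ)^((n:ℝ)-1) * ∑ k ∈ Finset.Ico n₀ n, r ^ k := hF
        _ ≤ (2:ℝ)^((n:ℝ)-1) * (1/2) := by
            apply mul_le_mul_of_nonneg_left hsum (le_of_lt (by rw [h2n1]; positivity))
        _ = (2:ℝ)^((n:ℝ)) / 4 := by rw [h2n1]; ring
    have hB : (gbLen ξ (n+1) : ℝ) ≤ (2:ℝ)^((n:ℝ)) / 2 := by
      calc (gbLen ξ (n+1) : ℝ) ≤ (2:ℝ)^((n:ℝ)) * r ^ n := hℓ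
        _ ≤ (2:ℝ)^((n:ℝ)) * ((1-r)/2) := by
            apply mul_le_mul_of_nonneg_left (le_trans hrn hrn₀) (le_of_lt hpos)
        _ ≤ (2:ℝ)^((n:ℝ)) / 2 := by nlinarith
    linarith
  have : (((gbMark ξ n₀ n).count false + gbLen ξ (n+1) : ℕ) : ℝ) ≤ ((2^n : ℕ) : ℝ) := by
    push_cast
    rw [← Real.rpow_natCast 2 n] at *
    linarith [hreal]
  exact_mod_cast this

lemma main_aux (ξ : ℝ) (n₀ : ℕ) (hξ : 0 < ξ)
    (hn₀ : (2:ℝ) ^ (-(ξ * (n₀:ℝ))) ≤ (1 - (2:ℝ) ^ (-ξ)) / 2) :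
    ∀ n j, ((gbMark ξ n₀ n).take j).count false ≤ ((gbMark ξ n₀ n).take j).count true := by
  intro n
  induction n with
  | zero =>
    intro j
    cases j <;> simp [gbMark]
  | succ n ih =>
    intro j
    by_cases h : n + 1 ≤ n₀
    · simp [gbMark, h, List.take_replicate, List.count_replicate]
    · push_neg at h
      have hn₀n : n₀ ≤ n := Nat.lt_succ_iff.mp h
      have unfold1 : gbMark ξ n₀ (n+1) =
          gbMark ξ n₀ n ++ List.replicate (gbLen ξ (n + 1)) false ++ gbMark ξ n₀ n := by
        simp [gbMark, Nat.not_le.mpr h]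
      set A := gbMark ξ n₀ n with hA
      set L := gbLen ξ (n+1) with hL
      rw [unfold1, List.take_append, List.take_append]
      simp only [List.count_append, List.take_replicate, List.count_replicate,
        List.length_append, List.length_replicate, beq_self_eq_true, if_true,
        if_false, reduceIte]
      have hkey := key ξ n₀ hξ hn₀ hn₀n
      have htrue := gbMark_count_true ξ n₀ n
      rw [← hA] at hkey htrue
      by_cases hj : j ≤ A.length
      · have h0 : j - A.length = 0 := Nat.sub_eq_zero_of_le hj
        have h0' : j - (A.length + L) = 0 := Nat.sub_eq_zero_of_le (le_trans hj (Nat.le_add_right _ _))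
        rw [h0, h0']
        simpa using ih j
      · push_neg at hj
        have hAj : A.take j = A := List.take_of_length_le (le_of_lt hj)
        rw [hAj]
        have hmin : min (j - A.length) L ≤ L := min_le_right _ _
        have hih := ih (j - (A.length + L))
        omega

theorem stmt1 (ξ : ℝ) (n₀ n : ℕ) (hξ : 0 < ξ)
    (hn₀ : (2:ℝ) ^ (-(ξ * (n₀:ℝ))) ≤ (1 - (2:ℝ) ^ (-ξ)) / 2)
    (hn : n₀ + 1 ≤ n) (j : ℕ) :
    ((gbMark ξ n₀ n).take j).count false ≤ ((gbMark ξ n₀ n).take j).count true := by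
  exact main_aux ξ n₀ hξ hn₀ n j
end

section
/- Let Z = Z_I ⊙ Z_Δ ⊙ Z_II be a concatenation of binary words where Z_Δ consists only of '0' symbols. If the middle index i_mid = ⌊(|Z|+1)/2⌋ of Z falls within the Z_Δ segment (the GBM event), then trimming (removing all leading and trailing zeros) the left half Z_L = (Z₁,...,Z_{i_mid}) yields the same word as trimming Z_I, and trimming the right half Z_R = (Z_{i_mid+1},...,Z_{|Z|}) yields the same word as trimming Z_II: (Z_L)* = (Z_I)* and (Z_R)* = (Z_II)*. -/
/-- Trimming: remove all leading and trailing `'0'` (= `false`) symbols. -/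
def trim (w : List Bool) : List Bool :=
  ((w.dropWhile (· = false)).reverse.dropWhile (· = false)).reverse

lemma dropWhile_zeros_append (z u : List Bool) (hz : ∀ b ∈ z, b = false) :
    (z ++ u).dropWhile (· = false) = u.dropWhile (· = false) := by
  induction z with
  | nil => simp
  | cons a t ih =>
      have ha : a = false := hz a (by simp)
      rw [List.cons_append, List.dropWhile_cons_of_pos (by simp [ha]),
        ih fun b hb => hz b (by simp [hb])]

lemma trim_zeros_append (z u : List Bool) (hz : ∀ b ∈ z, b = false) :
    trim (z ++ u) = trim u := by
  unfold trim; rw [dropWhile_zeros_append z u hz]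

lemma trim_append_zeros (u z : List Bool) (hz : ∀ b ∈ z, b = false) :
    trim (u ++ z) = trim u := by
  rcases h : u.dropWhile (· = false) with _ | ⟨a, t⟩
  · have hu : ∀ b ∈ u, b = false := by
      intro b hb
      by_contra hbf
      have := List.dropWhile_eq_nil_iff.mp h b hb
      simp at this hbf
      simp [this] at hbf
    have huz : ∀ b ∈ u ++ z, b = false := by
      intro b hb; rcases List.mem_append.mp hb with h' | h'
      · exact hu b h'
      · exact hz b h'
    have h2 : (u ++ z).dropWhile (· = false) = [] :=
      List.dropWhile_eq_nil_iff.mpr (by intro x hx; simp [huz x hx])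
    unfold trim; rw [h, h2]
  · have h3 : (u ++ z).dropWhile (· = false) = u.dropWhile (· = false) ++ z := by
      rw [List.dropWhile_append, h]; simp
    have h4 : (u.dropWhile (· = false) ++ z).reverse.dropWhile (· = false)
        = (u.dropWhile (· = false)).reverse.dropWhile (· = false) := by
      rw [List.reverse_append]
      exact dropWhile_zeros_append _ _ (by intro b hb; exact hz b (List.mem_reverse.mp hb))
    simp only [trim, h3, h4]

theorem stmt8 (ZI ZΔ ZII : List Bool) (hΔ : ∀ b ∈ ZΔ, b = false)
    (htrimmed : trim (ZI ++ ZΔ ++ ZII) = ZI ++ ZΔ ++ ZII)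
    (imid : ℕ) (himid : imid = ((ZI ++ ZΔ ++ ZII).length + 1) / 2)
    (hGBM1 : ZI.length < imid) (hGBM2 : imid ≤ ZI.length + ZΔ.length) :
    trim ((ZI ++ ZΔ ++ ZII).take imid) = trim ZI ∧
    trim ((ZI ++ ZΔ ++ ZII).drop imid) = trim ZII := by
  set k := imid - ZI.length with hk
  have hkle : k ≤ ZΔ.length := by omega
  have himid' : imid = ZI.length + k := by omega
  have htake : (ZI ++ ZΔ ++ ZII).take imid = ZI ++ ZΔ.take k := by
    rw [List.append_assoc, himid', List.take_append]
    congr 1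
    · simp
    · rw [List.take_append]
      have : ZI.length + k - ZI.length - ZΔ.length = 0 := by omega
      simp [this, Nat.min_eq_right hkle]
      omega
  have hdrop : (ZI ++ ZΔ ++ ZII).drop imid = ZΔ.drop k ++ ZII := by
    rw [List.append_assoc, himid', List.drop_append]
    have h1 : ZI.length + k - ZI.length = k := by omega
    have h2 : k - ZΔ.length = 0 := by omega
    rw [h1, List.drop_append, h2]
    simp
  constructor
  · rw [htake, trim_append_zeros _ _ (fun b hb => hΔ b (List.mem_of_mem_take hb))]
  · rw [hdrop, trim_zeros_append _ _ (fun b hb => hΔ b (List.mem_of_mem_drop hb))]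
end

section
/- Domination of the tail-free process: fix κ ≥ 1, d ≥ 0, 1/2 < γ_a < γ. Let (B_n) be a bit sequence, N = 2^n, and define for n ≥ n_w: Z''_{n+1} = κN^d·Z''_n + 2^{-2^{γn}} if B_{n+1}=0, and κN^d·(Z''_n)² + 2^{-2^{γn}} if B_{n+1}=1; and Z̄_{n+1} = 2κN^d·Z̄_n if B_{n+1}=0, and 2κN^d·(Z̄_n)² if B_{n+1}=1, with equal starting values Z''_{n_w} = Z̄_{n_w}. If n_w ≥ 1/(γ−γ_a) and Z̄_n ≥ 2^{-2^{γ_a n}} for all n ≥ n_w, then Z''_n ≤ Z̄_n for all n ≥ n_w. -/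
theorem stmt12 (κ d γa γ : ℝ) (hκ : 1 ≤ κ) (hd : 0 ≤ d)
    (hγa : 1 / 2 < γa) (hγ : γa < γ)
    (B : ℕ → Bool) (nw : ℕ) (hnw : 1 / (γ - γa) ≤ (nw : ℝ))
    (Z'' Zbar : ℕ → ℝ)
    (hinit : Z'' nw = Zbar nw)
    (hrec'' : ∀ n ≥ nw, Z'' (n + 1) =
      (if B (n + 1) then κ * ((2:ℝ) ^ n) ^ d * (Z'' n) ^ 2
       else κ * ((2:ℝ) ^ n) ^ d * Z'' n) + (2:ℝ) ^ (-((2:ℝ) ^ (γ * (n:ℝ)))))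
    (hrecbar : ∀ n ≥ nw, Zbar (n + 1) =
      if B (n + 1) then 2 * κ * ((2:ℝ) ^ n) ^ d * (Zbar n) ^ 2
      else 2 * κ * ((2:ℝ) ^ n) ^ d * Zbar n)
    (hlow : ∀ n ≥ nw, (2:ℝ) ^ (-((2:ℝ) ^ (γa * (n:ℝ)))) ≤ Zbar n) :
    ∀ n ≥ nw, Z'' n ≤ Zbar n := by
  have hsub : 0 < γ - γa := sub_pos.mpr hγ
  have tpos : ∀ x : ℝ, (0:ℝ) < (2:ℝ) ^ x := fun x => Real.rpow_pos_of_pos two_pos x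
  have key : ∀ n, nw ≤ n → 0 ≤ Z'' n ∧ Z'' n ≤ Zbar n := by
    intro n hn
    induction n, hn using Nat.le_induction with
    | base =>
      refine ⟨?_, hinit.le⟩
      rw [hinit]
      exact le_trans (tpos _).le (hlow nw le_rfl)
    | succ n hn ih =>
      obtain ⟨h0, hle⟩ := ih
      have hZb : (2:ℝ) ^ (-((2:ℝ) ^ (γa * (n:ℝ)))) ≤ Zbar n := hlow n hn
      have hZbpos : 0 < Zbar n := lt_of_lt_of_le (tpos _) hZb
      have hNpos : (0:ℝ) < ((2:ℝ) ^ n) ^ d := Real.rpow_pos_of_pos (by positivity) d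
      have hN1 : (1:ℝ) ≤ ((2:ℝ) ^ n) ^ d :=
        Real.one_le_rpow (one_le_pow₀ one_le_two) hd
      have hκN : (1:ℝ) ≤ κ * ((2:ℝ) ^ n) ^ d := by nlinarith
      have hmono : γa * (n:ℝ) ≤ γ * (n:ℝ) :=
        mul_le_mul_of_nonneg_right hγ.le (Nat.cast_nonneg n)
      have hexp : (2:ℝ) ^ (γa * (n:ℝ)) ≤ (2:ℝ) ^ (γ * (n:ℝ)) :=
        Real.rpow_le_rpow_of_exponent_le one_le_two hmono
      rw [hrec'' n hn, hrecbar n hn]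
      cases hB : B (n + 1) with
      | false =>
        simp only [Bool.false_eq_true, if_false]
        have ht : (2:ℝ) ^ (-((2:ℝ) ^ (γ * (n:ℝ)))) ≤ Zbar n :=
          le_trans (Real.rpow_le_rpow_of_exponent_le one_le_two (neg_le_neg hexp)) hZb
        constructor
        · have := (tpos (-((2:ℝ) ^ (γ * (n:ℝ))))).le
          nlinarith
        · nlinarith
      | true =>
        simp only [if_true]
        have h1n : (1:ℝ) ≤ (γ - γa) * (n:ℝ) := by
          have hn' : (nw:ℝ) ≤ (n:ℝ) := Nat.cast_le.mpr hn
          rw [div_le_iff₀ hsub] at hnw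
          nlinarith
        have hexp2 : γa * (n:ℝ) + 1 ≤ γ * (n:ℝ) := by nlinarith
        have hdouble : 2 * (2:ℝ) ^ (γa * (n:ℝ)) ≤ (2:ℝ) ^ (γ * (n:ℝ)) := by
          have : (2:ℝ) ^ (γa * (n:ℝ) + 1) ≤ (2:ℝ) ^ (γ * (n:ℝ)) :=
            Real.rpow_le_rpow_of_exponent_le one_le_two hexp2
          rwa [Real.rpow_add two_pos, Real.rpow_one, mul_comm] at this
        have hsq : ((2:ℝ) ^ (-((2:ℝ) ^ (γa * (n:ℝ))))) ^ 2
            = (2:ℝ) ^ (-(2 * (2:ℝ) ^ (γa * (n:ℝ)))) := by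
          rw [sq, ← Real.rpow_add two_pos]; ring_nf
        have ht : (2:ℝ) ^ (-((2:ℝ) ^ (γ * (n:ℝ)))) ≤ (Zbar n) ^ 2 := by
          calc (2:ℝ) ^ (-((2:ℝ) ^ (γ * (n:ℝ))))
              ≤ (2:ℝ) ^ (-(2 * (2:ℝ) ^ (γa * (n:ℝ)))) :=
                Real.rpow_le_rpow_of_exponent_le one_le_two (neg_le_neg hdouble)
            _ = ((2:ℝ) ^ (-((2:ℝ) ^ (γa * (n:ℝ))))) ^ 2 := hsq.symm
            _ ≤ (Zbar n) ^ 2 := pow_le_pow_left₀ (tpos _).le hZb 2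
        have hsq' : (Z'' n) ^ 2 ≤ (Zbar n) ^ 2 := pow_le_pow_left₀ h0 hle 2
        constructor
        · have := (tpos (-((2:ℝ) ^ (γ * (n:ℝ))))).le
          nlinarith
        · nlinarith [sq_nonneg (Zbar n)]
  exact fun n hn => (key n hn).2
end
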